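/- Let p and q be distributions on (ZMod 2)^2 satisfying p(0,0) + p(1,1) = q(0,0) + q(1,1) (equality of d₁ marginals). Then there exists λ : ZMod 2 × ZMod 2 × ZMod 2 → ℝ with λ(a,b,c) ≥ 0 for all a,b,c and total sum 1, such that ∑_c λ(a,b,c) = p(a,b) for all a,b, and ∑_{(a,b) : a+b = c+d} λ(a,b,c) = q(c,d) for all c,d. In particular, every simplicial distribution on the diamond scenario (two triangles glued along their d₁ faces, with outcome space the nerve of Z₂) is noncontextual. -/

import Mathlib

open Finset

lemma aux_div (A x y S : ℝ) (h0 : S = 0 → A = 0) (hxy : x + y = S) :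
    A * x / S + A * y / S = A := by
  rcases eq_or_ne S 0 with h | h
  · simp [h, h0 h]
  · rw [← add_div, ← mul_add, hxy, mul_div_assoc, div_self h, mul_one]

lemma aux_div2 (A B z S : ℝ) (h0 : S = 0 → z = 0) (hAB : A + B = S) :
    A * z / S + B * z / S = z := by
  rcases eq_or_ne S 0 with h | h
  · simp [h, h0 h]
  · rw [← add_div, ← add_mul, hAB, mul_comm, mul_div_assoc, div_self h, mul_one]

/-- A distribution on `(ZMod 2)²`: nonnegative with total mass 1. -/
def IsDist2 (p : ZMod 2 → ZMod 2 → ℝ) : Prop :=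
  (∀ a b, 0 ≤ p a b) ∧ (∑ a : ZMod 2, ∑ b : ZMod 2, p a b = 1)

/-- **The diamond scenario is noncontextual.**
If two distributions `p`, `q` on `(ZMod 2)²` have equal `d₁` marginals
(`p 0 0 + p 1 1 = q 0 0 + q 1 1`), then there is a probability distribution `λ` on the
set of global outcome assignments (parametrized by triples `(a, b, c)`, the fourth outcome
being `d = a + b + c`) whose marginals on the two triangles are `p` and `q`. -/
theorem diamond_noncontextual (p q : ZMod 2 → ZMod 2 → ℝ)
    (hp : IsDist2 p) (hq : IsDist2 q)
    (hglue : p 0 0 + p 1 1 = q 0 0 + q 1 1) :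
    ∃ lam : ZMod 2 × ZMod 2 × ZMod 2 → ℝ,
      (∀ a b c, 0 ≤ lam (a, b, c)) ∧
      (∑ x : ZMod 2 × ZMod 2 × ZMod 2, lam x = 1) ∧
      (∀ a b, ∑ c : ZMod 2, lam (a, b, c) = p a b) ∧
      (∀ c d, ∑ x ∈ univ.filter (fun x : ZMod 2 × ZMod 2 => x.1 + x.2 = c + d),
          lam (x.1, x.2, c) = q c d) := by
  obtain ⟨hpn, hps⟩ := hp
  obtain ⟨hqn, hqs⟩ := hq
  rw [show (univ : Finset (ZMod 2)) = {0, 1} from rfl] at hps hqs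
  simp at hps hqs
  have hq0 : q 0 0 + q 1 1 = p 0 0 + p 1 1 := hglue.symm
  have hq1 : q 0 1 + q 1 0 = p 0 1 + p 1 0 := by linarith
  have hz : ∀ z : ZMod 2, z = 0 ∨ z = 1 := by decide
  have key : ∀ a b : ZMod 2, ∑ c : ZMod 2,
      (fun x : ZMod 2 × ZMod 2 × ZMod 2 => p x.1 x.2.1 * q x.2.2 (x.1 + x.2.1 + x.2.2) /
        (if x.1 + x.2.1 = 0 then p 0 0 + p 1 1 else p 0 1 + p 1 0)) (a, b, c) = p a b := by
    intro a b
    rw [show (univ : Finset (ZMod 2)) = {0, 1} from rfl]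
    rcases hz a with rfl | rfl <;> rcases hz b with rfl | rfl <;>
      simp only [Finset.sum_insert (show (0:ZMod 2) ∉ ({1} : Finset (ZMod 2)) from by decide),
        Finset.sum_singleton,
        show (0+0 : ZMod 2) = 0 from rfl, show (0+1 : ZMod 2) = 1 from rfl,
        show (1+0 : ZMod 2) = 1 from rfl, show (1+1 : ZMod 2) = 0 from rfl,
        show ((0 : ZMod 2) = 0) = True from eq_true rfl,
        show ((1 : ZMod 2) = 0) = False from eq_false (by decide),
        if_true, if_false, zero_add, add_zero]
    · exact aux_div _ _ _ _ (fun h => by linarith [hpn 0 0, hpn 1 1]) hq0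
    · exact aux_div _ _ _ _ (fun h => by linarith [hpn 0 1, hpn 1 0]) hq1
    · exact aux_div _ _ _ _ (fun h => by linarith [hpn 0 1, hpn 1 0]) hq1
    · exact aux_div _ _ _ _ (fun h => by linarith [hpn 0 0, hpn 1 1])
        (by linarith : q 0 0 + q 1 1 = p 0 0 + p 1 1)
  refine ⟨fun x => p x.1 x.2.1 * q x.2.2 (x.1 + x.2.1 + x.2.2) /
      (if x.1 + x.2.1 = 0 then p 0 0 + p 1 1 else p 0 1 + p 1 0), ?_, ?_,
      fun a b => key a b, ?_⟩
  · intro a b c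
    apply div_nonneg (mul_nonneg (hpn _ _) (hqn _ _))
    split <;> exact add_nonneg (hpn _ _) (hpn _ _)
  · rw [Fintype.sum_prod_type]
    simp only [Fintype.sum_prod_type]
    calc ∑ a : ZMod 2, ∑ b : ZMod 2, ∑ c : ZMod 2,
          p a b * q c (a + b + c) / (if a + b = 0 then p 0 0 + p 1 1 else p 0 1 + p 1 0)
        = ∑ a : ZMod 2, ∑ b : ZMod 2, p a b := by
          refine Finset.sum_congr rfl fun a _ => Finset.sum_congr rfl fun b _ => key a b
      _ = 1 := by
          rw [show (univ : Finset (ZMod 2)) = {0, 1} from rfl]; simp; linarith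
  · intro c d
    rw [Finset.sum_filter, Fintype.sum_prod_type]
    rw [show (univ : Finset (ZMod 2)) = {0, 1} from rfl]
    rcases hz c with rfl | rfl <;> rcases hz d with rfl | rfl <;>
      simp only [Finset.sum_insert (show (0:ZMod 2) ∉ ({1} : Finset (ZMod 2)) from by decide),
        Finset.sum_singleton,
        show (0+0 : ZMod 2) = 0 from rfl, show (0+1 : ZMod 2) = 1 from rfl,
        show (1+0 : ZMod 2) = 1 from rfl, show (1+1 : ZMod 2) = 0 from rfl,
        show ((0 : ZMod 2) = 0) = True from eq_true rfl,
        show ((1 : ZMod 2) = 0) = False from eq_false (by decide),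
        show ((0 : ZMod 2) = 1) = False from eq_false (by decide),
        show ((1 : ZMod 2) = 1) = True from eq_true rfl,
        if_true, if_false, zero_add, add_zero]
    · exact aux_div2 _ _ _ _ (fun h => by linarith [hqn 0 0, hqn 1 1]) rfl
    · exact aux_div2 _ _ _ _ (fun h => by linarith [hqn 0 1, hqn 1 0]) rfl
    · exact aux_div2 _ _ _ _ (fun h => by linarith [hqn 0 1, hqn 1 0]) rfl
    · exact aux_div2 _ _ _ _ (fun h => by linarith [hqn 0 0, hqn 1 1]) rfl
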